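/- arXiv:2605.31164 — 2 statements merged into one kernel-verified Lean document; each statement's English description precedes it below -/
import Mathlib

section
/- In the linear regression setting, for any θ ∈ ℝ^d and any two sample indices a, b, the two orders of applying the SGD updates on samples a and b differ exactly by U_b(U_a(θ)) - U_a(U_b(θ)) = η²·⟨x_a, x_b⟩·(r_b(θ)·x_a - r_a(θ)·x_b). In particular the two update operators commute up to a term of order η². -/
open scoped RealInnerProductSpace

/-- Residual of sample `i` at parameters `θ`. -/
noncomputable def resid {d N : ℕ} (x : Fin N → EuclideanSpace ℝ (Fin d))
    (y : Fin N → ℝ) (i : Fin N) (θ : EuclideanSpace ℝ (Fin d)) : ℝ :=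
  y i - ⟪θ, x i⟫

/-- Single-sample SGD update on sample `a`. -/
noncomputable def sgdUpdate {d N : ℕ} (x : Fin N → EuclideanSpace ℝ (Fin d))
    (y : Fin N → ℝ) (η : ℝ) (a : Fin N) (θ : EuclideanSpace ℝ (Fin d)) :
    EuclideanSpace ℝ (Fin d) :=
  θ + (η * resid x y a θ) • x a

/-- The two orders of applying the SGD updates on samples `a` and `b` differ exactly by
`η² ⟨x_a, x_b⟩ (r_b(θ) x_a - r_a(θ) x_b)`. -/
theorem update_order_commutator
    (d N : ℕ) (hN : 1 ≤ N)
    (x : Fin N → EuclideanSpace ℝ (Fin d)) (y : Fin N → ℝ) (η : ℝ)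
    (θ : EuclideanSpace ℝ (Fin d)) (a b : Fin N) :
    sgdUpdate x y η b (sgdUpdate x y η a θ) - sgdUpdate x y η a (sgdUpdate x y η b θ) =
      (η ^ 2 * ⟪x a, x b⟫) • (resid x y b θ • x a - resid x y a θ • x b) := by
  simp only [sgdUpdate, resid, inner_add_left, inner_smul_left, RCLike.star_def,
    starRingEnd_apply, star_trivial]
  rw [real_inner_comm (x b) (x a)]
  module
end

section
/- (Correctness of the random-swap cost increment.) Let K ∈ ℕ and let S : Fin K → Fin K → ℝ be antisymmetric, i.e., S j i = -S i j for all i, j (in particular S i i = 0). For an ordering π : Fin K ≃ Fin K (π(s) is the batch at position s), define the violation cost C(π) = Σ_{s < t} max(0, S (π t) (π s)), summing over all pairs of positions s < t. Fix positions p < q, let i = π(p), j = π(q), and let π' be the ordering obtained from π by swapping the entries at positions p and q. Then C(π') - C(π) = S i j + Σ_{p < k < q} [ S i (π k) + S (π k) j ]. -/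
/-- Violation cost of an ordering `π` (with `π s` the batch at position `s`):
`C(π) = Σ_{s < t} max(0, S (π t) (π s))`. -/
noncomputable def orderCost {K : ℕ} (S : Fin K → Fin K → ℝ)
    (π : Fin K ≃ Fin K) : ℝ :=
  ∑ s : Fin K, ∑ t ∈ Finset.univ.filter (fun t => s < t), max 0 (S (π t) (π s))

open Finset

lemma orderCost_eq_pairs {K : ℕ} (S : Fin K → Fin K → ℝ) (π : Fin K ≃ Fin K) :
    orderCost S π =
      ∑ x ∈ Finset.univ.filter (fun x : Fin K × Fin K => x.1 < x.2),
        max 0 (S (π x.2) (π x.1)) := by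
  rw [orderCost, Finset.sum_filter, Fintype.sum_prod_type]
  simp [Finset.sum_filter]

/-- Correctness of the random-swap cost increment: for an antisymmetric advantage
matrix `S`, swapping positions `p < q` of the ordering `π` (with `i = π p`,
`j = π q`) changes the violation cost by
`S i j + Σ_{p < k < q} (S i (π k) + S (π k) j)`. -/
theorem swap_cost_increment
    (K : ℕ) (S : Fin K → Fin K → ℝ)
    (hanti : ∀ i j : Fin K, S j i = -S i j)
    (π : Fin K ≃ Fin K) (p q : Fin K) (hpq : p < q) :
    orderCost S ((Equiv.swap p q).trans π) - orderCost S π =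
      S (π p) (π q) +
        ∑ k ∈ Finset.univ.filter (fun k => p < k ∧ k < q),
          (S (π p) (π k) + S (π k) (π q)) := by
  classical
  set σ := Equiv.swap p q with hσ
  set F : Fin K × Fin K → ℝ := fun x => max 0 (S (π x.2) (π x.1)) with hF
  set P : Finset (Fin K × Fin K) := Finset.univ.filter (fun x => x.1 < x.2) with hP
  set Q : Finset (Fin K × Fin K) := Finset.univ.filter (fun x => σ x.1 < σ x.2) with hQ
  have hcost' : orderCost S (σ.trans π) = ∑ x ∈ Q, F x := by
    rw [orderCost_eq_pairs]
    refine Finset.sum_equiv (Equiv.prodCongr σ σ) ?_ ?_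
    · intro x
      simp [hP, hQ, Equiv.swap_apply_self, hσ]
    · intro x hx
      simp [hF, Equiv.trans_apply]
  have hcost : orderCost S π = ∑ x ∈ P, F x := orderCost_eq_pairs S π
  -- membership characterizations
  have hmemP : ∀ x : Fin K × Fin K, x ∈ P ↔ x.1 < x.2 := by
    intro x; simp [hP]
  have hmemQ : ∀ x : Fin K × Fin K, x ∈ Q ↔ σ x.1 < σ x.2 := by
    intro x; simp [hQ]
  -- difference over symmetric differences
  have hdiff : orderCost S (σ.trans π) - orderCost S π =
      ∑ x ∈ Q \ P, F x - ∑ x ∈ P \ Q, F x := by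
    rw [hcost', hcost, Finset.sum_sdiff_sub_sum_sdiff]
  -- Q \ P is the swap of P \ Q
  have hswapmem : ∀ x : Fin K × Fin K, x ∈ Q \ P ↔ (x.2, x.1) ∈ P \ Q := by
    rintro ⟨a, b⟩
    simp only [Finset.mem_sdiff, hmemP, hmemQ]
    constructor
    · rintro ⟨h1, h2⟩
      have hab : a ≠ b := fun h => absurd (h ▸ h1) (lt_irrefl _)
      exact ⟨(not_lt.mp h2).lt_of_ne (Ne.symm hab), not_lt.mpr h1.le⟩
    · rintro ⟨h1, h2⟩
      have hab : σ a ≠ σ b := fun h => absurd (σ.injective h ▸ h1) (lt_irrefl _)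
      exact ⟨(not_lt.mp h2).lt_of_ne hab, not_lt.mpr h1.le⟩
  have hsum_swap : ∑ x ∈ Q \ P, F x = ∑ x ∈ P \ Q, F (x.2, x.1) := by
    refine Finset.sum_nbij' (fun x => (x.2, x.1)) (fun x => (x.2, x.1)) ?_ ?_ ?_ ?_ ?_
    · intro x hx; exact (hswapmem x).mp hx
    · intro x hx; exact (hswapmem (x.2, x.1)).mpr (by simpa using hx)
    · intro x _; rfl
    · intro x _; rfl
    · intro x _; rfl
  -- termwise value
  have hterm : ∀ a b : Fin K, F (b, a) - F (a, b) = S (π a) (π b) := by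
    intro a b
    have h := hanti (π a) (π b)
    simp only [hF, h]
    rcases le_total 0 (S (π a) (π b)) with h1 | h1
    · rw [max_eq_right h1, max_eq_left (by linarith)]; ring
    · rw [max_eq_left h1, max_eq_right (by linarith)]; ring
  have hdiff2 : orderCost S (σ.trans π) - orderCost S π =
      ∑ x ∈ P \ Q, S (π x.1) (π x.2) := by
    rw [hdiff, hsum_swap, ← Finset.sum_sub_distrib]
    exact Finset.sum_congr rfl fun x _ => hterm x.1 x.2
  -- explicit description of P \ Q
  have hkey : ∀ a b : Fin K, (a < b ∧ ¬ σ a < σ b) ↔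
      ((a, b) = ((p, q) : Fin K × Fin K) ∨ (a = p ∧ p < b ∧ b < q) ∨ (b = q ∧ p < a ∧ a < q)) := by
    intro a b
    simp only [hσ, Equiv.swap_apply_def, Prod.ext_iff]
    split_ifs <;> omega
  have hPQ : P \ Q = insert ((p, q) : Fin K × Fin K)
      (((Finset.Ioo p q).image fun k => ((p : Fin K), k)) ∪
        ((Finset.Ioo p q).image fun k => (k, (q : Fin K)))) := by
    ext ⟨a, b⟩
    simp only [Finset.mem_sdiff, hmemP, hmemQ, Finset.mem_insert, Finset.mem_union,
      Finset.mem_image, Finset.mem_Ioo, Prod.ext_iff]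
    rw [show (a < b ∧ ¬ σ a < σ b) ↔ _ from hkey a b]
    constructor
    · rintro (h | ⟨h1, h2, h3⟩ | ⟨h1, h2, h3⟩)
      · exact Or.inl (Prod.ext_iff.mp h)
      · exact Or.inr (Or.inl ⟨b, ⟨h2, h3⟩, h1.symm, rfl⟩)
      · exact Or.inr (Or.inr ⟨a, ⟨h2, h3⟩, rfl, h1.symm⟩)
    · rintro (⟨h1, h2⟩ | ⟨k, ⟨hk1, hk2⟩, hk3, hk4⟩ | ⟨k, ⟨hk1, hk2⟩, hk3, hk4⟩)
      · exact Or.inl (Prod.ext h1 h2)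
      · exact Or.inr (Or.inl ⟨hk3.symm, hk4 ▸ hk1, hk4 ▸ hk2⟩)
      · exact Or.inr (Or.inr ⟨hk4.symm, hk3 ▸ hk1, hk3 ▸ hk2⟩)
  have hnotmem : ((p, q) : Fin K × Fin K) ∉
      (((Finset.Ioo p q).image fun k => ((p : Fin K), k)) ∪
        ((Finset.Ioo p q).image fun k => (k, (q : Fin K)))) := by
    simp only [Finset.mem_union, Finset.mem_image, Finset.mem_Ioo, Prod.ext_iff]
    rintro (⟨k, ⟨hk1, hk2⟩, _, hk4⟩ | ⟨k, ⟨hk1, hk2⟩, hk3, _⟩)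
    · exact absurd (hk4 ▸ hk2) (lt_irrefl _)
    · exact absurd (hk3 ▸ hk1) (lt_irrefl _)
  have hdisj : Disjoint ((Finset.Ioo p q).image fun k => ((p : Fin K), k))
      ((Finset.Ioo p q).image fun k => (k, (q : Fin K))) := by
    rw [Finset.disjoint_left]
    rintro ⟨a, b⟩ h1 h2
    simp only [Finset.mem_image, Finset.mem_Ioo, Prod.ext_iff] at h1 h2
    obtain ⟨k, ⟨hk1, _⟩, hk3, _⟩ := h1
    obtain ⟨m, ⟨hm1, _⟩, hm3, _⟩ := h2
    exact absurd (hk3 ▸ hm3 ▸ hm1) (lt_irrefl _)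
  have hfilter : Finset.univ.filter (fun k : Fin K => p < k ∧ k < q) = Finset.Ioo p q := by
    ext k; simp [Finset.mem_Ioo]
  rw [hdiff2, hPQ, Finset.sum_insert hnotmem, Finset.sum_union hdisj,
    Finset.sum_image (by intro x _ y _ h; exact (Prod.ext_iff.mp h).2),
    Finset.sum_image (by intro x _ y _ h; exact (Prod.ext_iff.mp h).1),
    hfilter, Finset.sum_add_distrib]
end
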